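/- There exist a constant Γ > 0, a constant k > 0, a continuous nonnegative kernel K : [0,1] → [0,∞) which is differentiable at θ = 0 with K(0) = K'(0) = 0 and satisfies K(θ)/√(1−θ) → k as θ → 1⁻, points 0 < x₁ < x₂, and a continuous function ω : [0,x₂] → ℝ with ω > 0 on [0,x₁), ω(x₁) = 0, ω < 0 on (x₁,x₂), ω(x₂) = 0, such that: (a) ω(x) = Γ − x² ∫₀¹ K(θ) · 1_{ω(xθ) > 0} dθ for every x ∈ [0,x₂]; and (b) for every ε > 0 there is no continuous function ω̃ : [0, x₂+ε] → ℝ extending ω that satisfies ω̃(x) = Γ − x² ∫₀¹ K(θ) · 1_{ω̃(xθ) > 0} dθ for every x ∈ [0, x₂+ε] and is nonzero on (x₂, x₂+δ) for some δ ∈ (0,ε]. That is, degenerate solutions of the precipitation integral equation exist: the solution cannot be continued past the zero x₂ as a sign-definite ring pattern. -/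

import Mathlib

open MeasureTheory Set Filter Topology

noncomputable def Kd (θ : ℝ) : ℝ :=
  if θ ≤ 1/4 then 24*θ^2 - 64*θ^3
  else if θ ≤ 1/2 then 2*θ
  else Real.sqrt (1-θ) * (33*Real.sqrt 2/8 - 25*Real.sqrt 2/4*(1-θ))

noncomputable def Gd (u : ℝ) : ℝ :=
  11*Real.sqrt 2/4 * (u*Real.sqrt u) - 5*Real.sqrt 2/2 * (u^2*Real.sqrt u)

noncomputable def ωd (x : ℝ) : ℝ :=
  max (1 - x^2) (1 - x^2 + x^2 * Gd ((x-1)/x))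

lemma s2_sq : (Real.sqrt 2)^2 = 2 := Real.sq_sqrt (by norm_num)
lemma s2_pos : (0:ℝ) < Real.sqrt 2 := Real.sqrt_pos.mpr (by norm_num)

lemma sqrt_half : Real.sqrt (1/2) = 1 / Real.sqrt 2 := by
  rw [show (1/2:ℝ) = 2⁻¹ by norm_num, Real.sqrt_inv, one_div]

lemma Kd3_half :
    Real.sqrt (1-(1/2)) * (33*Real.sqrt 2/8 - 25*Real.sqrt 2/4*(1-(1/2))) = 1 := by
  have h : (1:ℝ) - 1/2 = 1/2 := by norm_num
  rw [h, sqrt_half]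
  have hs := s2_pos
  have h2 := s2_sq
  field_simp
  nlinarith [h2]

lemma Gd_half : Gd (1/2) = 3/4 := by
  rw [Gd, sqrt_half]
  have hs := s2_pos
  have h2 := s2_sq
  field_simp
  nlinarith [h2]

lemma Gd_zero : Gd 0 = 0 := by simp [Gd]

lemma Gd_nonpos {u : ℝ} (h : u ≤ 0) : Gd u = 0 := by
  simp [Gd, Real.sqrt_eq_zero'.mpr h]

lemma Gd_nonneg {u : ℝ} (h : u ≤ 1/2) : 0 ≤ Gd u := by
  rcases le_or_gt u 0 with h0 | h0
  · rw [Gd_nonpos h0]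
  · have hs := s2_pos
    have hsq : 0 ≤ Real.sqrt u := Real.sqrt_nonneg u
    have : Gd u = u * Real.sqrt u * (11*Real.sqrt 2/4 - 5*Real.sqrt 2/2 * u) := by
      rw [Gd]; ring
    rw [this]
    have h1 : 0 ≤ u * Real.sqrt u := by positivity
    have h2 : 0 ≤ 11*Real.sqrt 2/4 - 5*Real.sqrt 2/2 * u := by nlinarith
    positivity

lemma Gd_pos {u : ℝ} (h0 : 0 < u) (h : u ≤ 1/2) : 0 < Gd u := by
  have hs := s2_pos
  have hsq : 0 < Real.sqrt u := Real.sqrt_pos.mpr h0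
  have : Gd u = u * Real.sqrt u * (11*Real.sqrt 2/4 - 5*Real.sqrt 2/2 * u) := by
    rw [Gd]; ring
  rw [this]
  have h1 : 0 < u * Real.sqrt u := by positivity
  have h2 : 0 < 11*Real.sqrt 2/4 - 5*Real.sqrt 2/2 * u := by nlinarith
  positivity

lemma Gd_cont : Continuous Gd := by
  unfold Gd
  fun_prop

lemma Kd_cont : Continuous Kd := by
  unfold Kd
  apply Continuous.if_le
  · fun_prop
  · apply Continuous.if_le
    · fun_prop
    · fun_prop
    · fun_prop
    · fun_prop
    · intro x hx
      rw [hx, Kd3_half]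
      norm_num
  · fun_prop
  · fun_prop
  · intro x hx
    rw [hx, if_pos (by norm_num)]
    norm_num

lemma Kd_eq1 {θ : ℝ} (h : θ ≤ 1/4) : Kd θ = 24*θ^2 - 64*θ^3 := if_pos h

lemma Kd_eq2 {θ : ℝ} (h1 : 1/4 ≤ θ) (h2 : θ ≤ 1/2) : Kd θ = 2*θ := by
  rcases eq_or_lt_of_le h1 with h | h
  · rw [Kd, if_pos h.symm.le, ← h]; norm_num
  · rw [Kd, if_neg (by linarith), if_pos h2]

lemma Kd_eq3 {θ : ℝ} (h1 : 1/2 ≤ θ) :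
    Kd θ = Real.sqrt (1-θ) * (33*Real.sqrt 2/8 - 25*Real.sqrt 2/4*(1-θ)) := by
  rcases eq_or_lt_of_le h1 with h | h
  · rw [← h, Kd3_half, Kd, if_neg (by norm_num), if_pos (by norm_num)]; norm_num
  · rw [Kd, if_neg (by linarith), if_neg (by linarith)]

lemma Kd_zero : Kd 0 = 0 := by rw [Kd_eq1 (by norm_num)]; norm_num

lemma Kd_one : Kd 1 = 0 := by rw [Kd_eq3 (by norm_num)]; norm_num

lemma Kd_nonneg {θ : ℝ} (h0 : 0 ≤ θ) (h1 : θ ≤ 1) : 0 ≤ Kd θ := by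
  rcases le_or_gt θ (1/4) with h | h
  · rw [Kd_eq1 h]; nlinarith
  · rcases le_or_gt θ (1/2) with h2 | h2
    · rw [Kd_eq2 h.le h2]; linarith
    · rw [Kd_eq3 h2.le]
      have hs := s2_pos
      have hsq : 0 ≤ Real.sqrt (1-θ) := Real.sqrt_nonneg _
      have : 0 ≤ 33*Real.sqrt 2/8 - 25*Real.sqrt 2/4*(1-θ) := by nlinarith
      positivity

lemma Kd_deriv0 : HasDerivWithinAt Kd 0 (Icc 0 1) 0 := by
  have hpoly : HasDerivAt (fun θ:ℝ => 24*θ^2 - 64*θ^3) 0 0 := by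
    have h1 := (hasDerivAt_pow 2 (0:ℝ)).const_mul 24
    have h2 := (hasDerivAt_pow 3 (0:ℝ)).const_mul 64
    have := h1.sub h2
    norm_num at this
    exact this
  apply HasDerivWithinAt.congr_of_eventuallyEq (hpoly.hasDerivWithinAt)
  · filter_upwards [nhdsWithin_le_nhds (Iio_mem_nhds (by norm_num : (0:ℝ) < 1/4))]
      with θ hθ
    exact Kd_eq1 (le_of_lt hθ)
  · rw [Kd_eq1 (by norm_num)]

lemma Kd_tendsto :
    Tendsto (fun θ => Kd θ / Real.sqrt (1 - θ)) (nhdsWithin 1 (Iio 1))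
      (nhds (33*Real.sqrt 2/8)) := by
  have h1 : Tendsto (fun θ:ℝ => 33*Real.sqrt 2/8 - 25*Real.sqrt 2/4*(1-θ))
      (nhdsWithin 1 (Iio 1)) (nhds (33*Real.sqrt 2/8)) := by
    have : Continuous (fun θ:ℝ => 33*Real.sqrt 2/8 - 25*Real.sqrt 2/4*(1-θ)) := by fun_prop
    have h := (this.tendsto 1).mono_left (nhdsWithin_le_nhds (s := Iio 1))
    norm_num at h
    exact h
  apply h1.congr'
  filter_upwards [Ioo_mem_nhdsLT (by norm_num : (1/2:ℝ) < 1)] with θ hθ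
  rw [Kd_eq3 hθ.1.le]
  have h2 : Real.sqrt (1-θ) ≠ 0 := by
    rw [Real.sqrt_ne_zero']; linarith [hθ.2]
  field_simp

lemma ωd_le_one {x : ℝ} (h0 : 0 ≤ x) (h1 : x ≤ 1) : ωd x = 1 - x^2 := by
  have hG : Gd ((x-1)/x) = 0 := by
    rcases eq_or_lt_of_le h0 with h | h
    · rw [← h]; norm_num [Gd_zero]
    · exact Gd_nonpos (div_nonpos_of_nonpos_of_nonneg (by linarith) h.le)
  rw [ωd, hG]
  simp

lemma ωd_gt_one {x : ℝ} (h1 : 1 ≤ x) (h2 : x ≤ 2) :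
    ωd x = 1 - x^2 + x^2 * Gd ((x-1)/x) := by
  have hx : 0 < x := by linarith
  have harg : (x-1)/x ≤ 1/2 := by
    rw [div_le_iff₀ hx]; linarith
  have hG : 0 ≤ Gd ((x-1)/x) := Gd_nonneg harg
  exact max_eq_right (by nlinarith)

lemma ωd_pos {x : ℝ} (h0 : 0 ≤ x) (h1 : x < 1) : 0 < ωd x := by
  have := le_max_left (1 - x^2) (1 - x^2 + x^2 * Gd ((x-1)/x))
  rw [ωd]; nlinarith

lemma ωd_one : ωd 1 = 0 := by rw [ωd_le_one (by norm_num) le_rfl]; norm_num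

lemma ωd_two : ωd 2 = 0 := by
  rw [ωd_gt_one (by norm_num) le_rfl]
  norm_num [Gd_half]

lemma ωd_contOn : ContinuousOn ωd (Icc 0 2) := by
  have hf : ContinuousOn (fun x => x^2 * Gd ((x-1)/x)) (Icc (0:ℝ) 2) := by
    intro x hx
    rcases lt_or_ge x 1 with h | h
    · have hzero : ∀ y ∈ Icc (0:ℝ) 2 ∩ Iio 1, y^2 * Gd ((y-1)/y) = 0 := by
        intro y hy
        rcases eq_or_lt_of_le hy.1.1 with h0 | h0
        · rw [← h0]; norm_num
        · rw [Gd_nonpos (div_nonpos_of_nonpos_of_nonneg (by linarith [mem_Iio.mp hy.2]) h0.le)]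
          ring
      apply ContinuousWithinAt.congr_of_eventuallyEq
        (continuousWithinAt_const : ContinuousWithinAt (fun _ => (0:ℝ)) _ _)
      · filter_upwards [inter_mem_nhdsWithin (Icc 0 2) (Iio_mem_nhds h)] with y hy
        exact hzero y hy
      · exact hzero x ⟨hx, h⟩
    · have hx0 : x ≠ 0 := by linarith
      apply ContinuousAt.continuousWithinAt
      apply ContinuousAt.mul (by fun_prop)
      apply Gd_cont.continuousAt.comp
      exact ContinuousAt.div (by fun_prop) (by fun_prop) hx0
  intro x hx
  exact Filter.Tendsto.max ((by fun_prop : ContinuousOn (fun x:ℝ => 1 - x^2) (Icc 0 2)) x hx)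
    (((by fun_prop : ContinuousOn (fun x:ℝ => 1 - x^2) (Icc 0 2)) x hx).add (hf x hx))

lemma hasDerivAt_usqrtu {u : ℝ} (hu : 0 < u) :
    HasDerivAt (fun u => u * Real.sqrt u) (3/2 * Real.sqrt u) u := by
  have h := (hasDerivAt_id u).mul (Real.hasDerivAt_sqrt hu.ne')
  have hs : Real.sqrt u ≠ 0 := (Real.sqrt_pos.mpr hu).ne'
  have hsq : Real.sqrt u ^ 2 = u := Real.sq_sqrt hu.le
  refine h.congr_deriv ?_
  simp only [id_eq]
  field_simp
  linear_combination (-1) * hsq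

lemma hasDerivAt_u2sqrtu {u : ℝ} (hu : 0 < u) :
    HasDerivAt (fun u => u^2 * Real.sqrt u) (5/2 * (u * Real.sqrt u)) u := by
  have h := (hasDerivAt_pow 2 u).mul (Real.hasDerivAt_sqrt hu.ne')
  have hs : Real.sqrt u ≠ 0 := (Real.sqrt_pos.mpr hu).ne'
  have hsq : Real.sqrt u ^ 2 = u := Real.sq_sqrt hu.le
  refine h.congr_deriv ?_
  push_cast
  field_simp
  linear_combination (-1) * hsq

lemma hasDerivAt_Gd {u : ℝ} (hu : 0 < u) :
    HasDerivAt Gd (Real.sqrt u * (33*Real.sqrt 2/8 - 25*Real.sqrt 2/4*u)) u := by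
  have h := ((hasDerivAt_usqrtu hu).const_mul (11*Real.sqrt 2/4)).sub
    ((hasDerivAt_u2sqrtu hu).const_mul (5*Real.sqrt 2/2))
  refine h.congr_deriv ?_
  ring

lemma psi_cont : Continuous (fun t : ℝ => 1 - Gd (1-t) - t^2) :=
  (continuous_const.sub (Gd_cont.comp (continuous_const.sub continuous_id))).sub (continuous_pow 2)

/-- derivative of ψ t = 1 - Gd (1-t) - t^2 -/
lemma hasDerivAt_psi {t : ℝ} (ht : t < 1) :
    HasDerivAt (fun t => 1 - Gd (1-t) - t^2)
      ((Real.sqrt (1-t) - Real.sqrt 2/2) *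
        (-(25*Real.sqrt 2/4)*(Real.sqrt (1-t))^2 - 17/4*(Real.sqrt (1-t)) + 2*Real.sqrt 2)) t := by
  have hu : 0 < 1 - t := by linarith
  have hG : HasDerivAt (fun t : ℝ => Gd (1-t))
      (-(Real.sqrt (1-t) * (33*Real.sqrt 2/8 - 25*Real.sqrt 2/4*(1-t)))) t := by
    have hinner : HasDerivAt (fun t:ℝ => 1 - t) (-1) t := by
      simpa using (hasDerivAt_id t).const_sub 1
    have := (hasDerivAt_Gd hu).comp t hinner
    refine this.congr_deriv ?_
    ring
  have h := ((hasDerivAt_const t (1:ℝ)).sub hG).sub (hasDerivAt_pow 2 t)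
  refine h.congr_deriv ?_
  have hsq : (Real.sqrt (1-t))^2 = 1 - t := Real.sq_sqrt hu.le
  have h2 := s2_sq
  push_cast
  linear_combination (-(2:ℝ) + 25/4 * Real.sqrt (1-t) * Real.sqrt 2) * hsq + (1 - (25/8) * (Real.sqrt (1-t))^2) * h2

lemma psi_pos : ∀ t ∈ Ioo (1/2:ℝ) 1, 0 < 1 - Gd (1-t) - t^2 := by
  have h2 : (Real.sqrt 2)^2 = 2 := s2_sq
  have hs : 0 < Real.sqrt 2 := s2_pos
  set q : ℝ → ℝ := fun v => -(25*Real.sqrt 2/4)*v^2 - 17/4*v + 2*Real.sqrt 2 with hq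
  set ψ : ℝ → ℝ := fun t => 1 - Gd (1-t) - t^2 with hψ
  obtain ⟨v₀, hv₀mem, hv₀⟩ : ∃ v₀ ∈ Ioo (0:ℝ) (Real.sqrt 2/2), q v₀ = 0 := by
    have hc : ContinuousOn q (Icc 0 (Real.sqrt 2/2)) := by fun_prop
    have key := intermediate_value_Ioo' (by positivity : (0:ℝ) ≤ Real.sqrt 2/2) hc
    have h0mem : (0:ℝ) ∈ Ioo (q (Real.sqrt 2/2)) (q 0) := by
      constructor
      · simp only [hq]; nlinarith
      · simp only [hq]; nlinarith
    obtain ⟨v₀, hv₀mem, hv₀⟩ := key h0mem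
    exact ⟨v₀, hv₀mem, hv₀⟩
  have hv₀nn : 0 ≤ v₀ := hv₀mem.1.le
  set θ₀ : ℝ := 1 - v₀^2 with hθ₀def
  have hθ₀ : θ₀ ∈ Ioo (1/2:ℝ) 1 := by
    constructor
    · have : v₀^2 < (Real.sqrt 2/2)^2 := by nlinarith [hv₀mem.1, hv₀mem.2]
      simp only [hθ₀def]; nlinarith [h2]
    · simp only [hθ₀def]; nlinarith [hv₀mem.1]
  have hψhalf : ψ (1/2) = 0 := by
    simp only [hψ]; norm_num [Gd_half]
  have hψone : ψ 1 = 0 := by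
    simp only [hψ]; norm_num [Gd_zero]
  have hmono : StrictMonoOn ψ (Icc (1/2) θ₀) := by
    apply strictMonoOn_of_deriv_pos (convex_Icc _ _) psi_cont.continuousOn
    intro t ht
    rw [interior_Icc] at ht
    have ht1 : t < 1 := lt_trans ht.2 hθ₀.2
    rw [(hasDerivAt_psi ht1).deriv]
    set v := Real.sqrt (1-t) with hv
    have hvsq : v^2 = 1-t := Real.sq_sqrt (by linarith)
    have hvgt : v₀ < v := by
      have h1 : v₀^2 < 1 - t := by
        have := ht.2; simp only [hθ₀def] at this; nlinarith
      nlinarith [Real.sqrt_nonneg (1-t)]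
    have hvlt : v < Real.sqrt 2/2 := by
      have hhalf : 1 - t < 1/2 := by linarith [ht.1]
      nlinarith [Real.sqrt_nonneg (1-t)]
    have hqv : q v < 0 := by
      have key : q v = q v₀ + (v - v₀) * (-(25*Real.sqrt 2/4)*(v+v₀) - 17/4) := by
        simp only [hq]; ring
      rw [key, hv₀, zero_add]
      apply mul_neg_of_pos_of_neg (sub_pos.mpr hvgt)
      nlinarith
    have hbr : -(25*Real.sqrt 2/4)*v^2 - 17/4*v + 2*Real.sqrt 2 = q v := rfl
    rw [hbr]
    exact mul_pos_of_neg_of_neg (by linarith) hqv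
  have hanti : StrictAntiOn ψ (Icc θ₀ 1) := by
    apply strictAntiOn_of_deriv_neg (convex_Icc _ _) psi_cont.continuousOn
    intro t ht
    rw [interior_Icc] at ht
    have ht1 : t < 1 := ht.2
    rw [(hasDerivAt_psi ht1).deriv]
    set v := Real.sqrt (1-t) with hv
    have hvsq : v^2 = 1-t := Real.sq_sqrt (by linarith)
    have hvnn : 0 ≤ v := Real.sqrt_nonneg _
    have hvlt : v < v₀ := by
      have h1 : 1 - t < v₀^2 := by
        have := ht.1; simp only [hθ₀def] at this; nlinarith
      nlinarith [hv₀mem.1]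
    have hqv : 0 < q v := by
      have key : q v = q v₀ + (v - v₀) * (-(25*Real.sqrt 2/4)*(v+v₀) - 17/4) := by
        simp only [hq]; ring
      rw [key, hv₀, zero_add]
      apply mul_pos_of_neg_of_neg (by linarith)
      nlinarith
    have hbr : -(25*Real.sqrt 2/4)*v^2 - 17/4*v + 2*Real.sqrt 2 = q v := rfl
    rw [hbr]
    exact mul_neg_of_neg_of_pos (by nlinarith [hv₀mem.2]) hqv
  intro t ht
  rcases le_or_gt t θ₀ with h | h
  · have := hmono ⟨le_rfl, hθ₀.1.le⟩ ⟨ht.1.le, h⟩ ht.1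
    rw [hψhalf] at this
    exact this
  · have := hanti ⟨h.le, ht.2.le⟩ ⟨hθ₀.2.le, le_rfl⟩ ht.2
    rw [hψone] at this
    exact this

lemma ωd_neg {y : ℝ} (h1 : 1 < y) (h2 : y < 2) : ωd y < 0 := by
  have hy : 0 < y := by linarith
  have ht : 1/y ∈ Ioo (1/2:ℝ) 1 := by
    constructor
    · rw [lt_div_iff₀ hy]; linarith
    · rw [div_lt_one hy]; linarith
  have hψ := psi_pos (1/y) ht
  have harg : (y-1)/y = 1 - 1/y := by field_simp
  rw [ωd_gt_one h1.le h2.le, harg]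
  have hinv : (1/y)^2 = 1/y^2 := by ring
  -- ωd y = -y^2 * ψ(1/y)
  have : 1 - y^2 + y^2 * Gd (1 - 1/y) = -(y^2 * (1 - Gd (1-1/y) - (1/y)^2)) := by
    field_simp
    ring
  rw [this]
  have : 0 < y^2 * (1 - Gd (1-1/y) - (1/y)^2) := by positivity
  linarith

/-- FTC on first piece -/
lemma int_Kd_1 {b : ℝ} (hb0 : 0 ≤ b) (hb : b ≤ 1/4) :
    ∫ θ in (0:ℝ)..b, Kd θ = 8*b^3 - 16*b^4 := by
  have hcong : ∫ θ in (0:ℝ)..b, Kd θ = ∫ θ in (0:ℝ)..b, (24*θ^2 - 64*θ^3) := by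
    apply intervalIntegral.integral_congr
    intro θ hθ
    rw [uIcc_of_le hb0] at hθ
    exact Kd_eq1 (le_trans hθ.2 hb)
  rw [hcong]
  have hderiv : ∀ θ ∈ uIcc (0:ℝ) b,
      HasDerivAt (fun θ:ℝ => 8*θ^3 - 16*θ^4) (24*θ^2 - 64*θ^3) θ := by
    intro θ _
    have h1 := (hasDerivAt_pow 3 θ).const_mul (8:ℝ)
    have h2 := (hasDerivAt_pow 4 θ).const_mul (16:ℝ)
    have := h1.sub h2
    refine this.congr_deriv ?_
    push_cast
    ring
  rw [intervalIntegral.integral_eq_sub_of_hasDerivAt hderiv ((by fun_prop : Continuous fun θ:ℝ => 24*θ^2-64*θ^3).intervalIntegrable _ _)]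
  norm_num

lemma int_Kd_2 {b : ℝ} (hb0 : 1/4 ≤ b) (hb : b ≤ 1/2) :
    ∫ θ in (0:ℝ)..b, Kd θ = b^2 := by
  have hsplit : ∫ θ in (0:ℝ)..b, Kd θ =
      (∫ θ in (0:ℝ)..(1/4:ℝ), Kd θ) + ∫ θ in (1/4:ℝ)..b, Kd θ := by
    rw [intervalIntegral.integral_add_adjacent_intervals] <;>
      exact (Kd_cont.intervalIntegrable _ _)
  have h2 : ∫ θ in (1/4:ℝ)..b, Kd θ = b^2 - (1/4)^2 := by
    have hcong : ∫ θ in (1/4:ℝ)..b, Kd θ = ∫ θ in (1/4:ℝ)..b, (2*θ) := by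
      apply intervalIntegral.integral_congr
      intro θ hθ
      rw [uIcc_of_le hb0] at hθ
      exact Kd_eq2 hθ.1 (le_trans hθ.2 hb)
    rw [hcong]
    have hderiv : ∀ θ ∈ uIcc (1/4:ℝ) b,
        HasDerivAt (fun θ:ℝ => θ^2) (2*θ) θ := by
      intro θ _
      have := hasDerivAt_pow 2 θ
      refine this.congr_deriv ?_
      push_cast
      ring
    rw [intervalIntegral.integral_eq_sub_of_hasDerivAt hderiv ((by fun_prop : Continuous fun θ:ℝ => 2*θ).intervalIntegrable _ _)]
  rw [hsplit, h2, int_Kd_1 (by norm_num) le_rfl]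
  norm_num

lemma int_Kd_3 {b : ℝ} (hb0 : 1/2 ≤ b) (hb : b ≤ 1) :
    ∫ θ in (0:ℝ)..b, Kd θ = 1 - Gd (1-b) := by
  have hsplit : ∫ θ in (0:ℝ)..b, Kd θ =
      (∫ θ in (0:ℝ)..(1/2:ℝ), Kd θ) + ∫ θ in (1/2:ℝ)..b, Kd θ := by
    rw [intervalIntegral.integral_add_adjacent_intervals] <;>
      exact (Kd_cont.intervalIntegrable _ _)
  have h2 : ∫ θ in (1/2:ℝ)..b, Kd θ = Gd (1/2) - Gd (1-b) := by
    have hcong : ∫ θ in (1/2:ℝ)..b, Kd θ =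
        ∫ θ in (1/2:ℝ)..b, (Real.sqrt (1-θ) * (33*Real.sqrt 2/8 - 25*Real.sqrt 2/4*(1-θ))) := by
      apply intervalIntegral.integral_congr
      intro θ hθ
      rw [uIcc_of_le hb0] at hθ
      exact Kd_eq3 hθ.1
    rw [hcong]
    have hcont : ContinuousOn (fun θ:ℝ => - Gd (1-θ)) (Icc (1/2) b) :=
      ((Gd_cont.comp (continuous_const.sub continuous_id)).neg).continuousOn
    have hderiv : ∀ θ ∈ Ioo (1/2:ℝ) b,
        HasDerivWithinAt (fun θ:ℝ => - Gd (1-θ))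
          (Real.sqrt (1-θ) * (33*Real.sqrt 2/8 - 25*Real.sqrt 2/4*(1-θ))) (Ioi θ) θ := by
      intro θ hθ
      have hu : 0 < 1 - θ := by linarith [hθ.2, hb]
      have hinner : HasDerivAt (fun t:ℝ => 1 - t) (-1) θ := by
        simpa using (hasDerivAt_id θ).const_sub 1
      have := ((hasDerivAt_Gd hu).comp θ hinner).neg
      have heq : HasDerivAt (fun θ:ℝ => - Gd (1-θ))
          (Real.sqrt (1-θ) * (33*Real.sqrt 2/8 - 25*Real.sqrt 2/4*(1-θ))) θ := by
        refine this.congr_deriv ?_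
        ring
      exact heq.hasDerivWithinAt
    have := intervalIntegral.integral_eq_sub_of_hasDeriv_right_of_le hb0 hcont hderiv
      (by apply Continuous.intervalIntegrable; fun_prop)
    rw [this]
    ring_nf
  rw [hsplit, h2, int_Kd_2 (by norm_num) le_rfl, Gd_half]
  norm_num
  ring

lemma int_Kd_01 : ∫ θ in (0:ℝ)..1, Kd θ = 1 := by
  rw [int_Kd_3 (by norm_num) le_rfl]
  norm_num [Gd_zero]

lemma int_Kd_tail {s : ℝ} (hs0 : 1/2 ≤ s) (hs : s ≤ 1) :
    ∫ θ in s..(1:ℝ), Kd θ = Gd (1-s) := by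
  have h := intervalIntegral.integral_add_adjacent_intervals
    (Kd_cont.intervalIntegrable (μ := volume) 0 s) (Kd_cont.intervalIntegrable s 1)
  have h1 := int_Kd_3 hs0 hs
  have h2 := int_Kd_01
  rw [h1, h2] at h
  linarith

/-- Splitting an integral of `f` matching `Kd` on `(0,t)∪(s,1)` and `0` on `(t,s)`. -/
lemma integral_split {f : ℝ → ℝ} {t s : ℝ} (ht0 : 0 ≤ t) (hts : t ≤ s) (hs1 : s ≤ 1)
    (h1 : ∀ θ ∈ Ioo (0:ℝ) t, f θ = Kd θ)
    (h2 : ∀ θ ∈ Ioo t s, f θ = 0)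
    (h3 : ∀ θ ∈ Ioo s (1:ℝ), f θ = Kd θ) :
    ∫ θ in (0:ℝ)..1, f θ = (∫ θ in (0:ℝ)..t, Kd θ) + ∫ θ in s..(1:ℝ), Kd θ := by
  set g : ℝ → ℝ := (Ioo 0 t ∪ Ioo s 1).indicator Kd with hg
  have hmeas : MeasurableSet (Ioo (0:ℝ) t ∪ Ioo s 1) :=
    measurableSet_Ioo.union measurableSet_Ioo
  have hae : ∀ᵐ θ : ℝ, θ ∉ ({t, s, 1} : Set ℝ) := by
    rw [← measure_eq_zero_iff_ae_notMem]
    have : ({t, s, 1} : Set ℝ).Finite :=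
      (Set.finite_singleton 1).insert s |>.insert t
    exact this.measure_zero _
  have step1 : ∫ θ in (0:ℝ)..1, f θ = ∫ θ in (0:ℝ)..1, g θ := by
    apply intervalIntegral.integral_congr_ae
    filter_upwards [hae] with θ hθ hmem
    rw [uIoc_of_le (by norm_num : (0:ℝ) ≤ 1)] at hmem
    simp only [mem_insert_iff, mem_singleton_iff, not_or] at hθ
    rcases lt_trichotomy θ t with h | h | h
    · have hθI : θ ∈ Ioo (0:ℝ) t := ⟨hmem.1, h⟩
      rw [h1 θ hθI, hg, Set.indicator_of_mem (Set.mem_union_left _ hθI)]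
    · exact absurd h hθ.1
    · rcases lt_trichotomy θ s with h' | h' | h'
      · have hθI : θ ∈ Ioo t s := ⟨h, h'⟩
        rw [h2 θ hθI, hg, Set.indicator_of_notMem]
        intro hc
        rcases (Set.mem_union _ _ _).mp hc with hc | hc
        · exact absurd hc.2 (not_lt.mpr h.le)
        · exact absurd hc.1 (not_lt.mpr h'.le)
      · exact absurd h' hθ.2.1
      · have hne1 : θ < 1 := lt_of_le_of_ne hmem.2 hθ.2.2
        have hθI : θ ∈ Ioo s (1:ℝ) := ⟨h', hne1⟩
        rw [h3 θ hθI, hg, Set.indicator_of_mem (Set.mem_union_right _ hθI)]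
  have hgint : IntervalIntegrable g volume 0 1 := by
    rw [intervalIntegrable_iff, uIoc_of_le (by norm_num : (0:ℝ) ≤ 1)]
    exact (Kd_cont.integrableOn_Ioc).indicator hmeas
  have hsub1 : uIcc (0:ℝ) t ⊆ uIcc (0:ℝ) 1 := by
    rw [uIcc_of_le ht0, uIcc_of_le (by norm_num : (0:ℝ) ≤ 1)]
    exact Icc_subset_Icc le_rfl (le_trans hts hs1)
  have hsub2 : uIcc t s ⊆ uIcc (0:ℝ) 1 := by
    rw [uIcc_of_le hts, uIcc_of_le (by norm_num : (0:ℝ) ≤ 1)]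
    exact Icc_subset_Icc ht0 hs1
  have hsub3 : uIcc s (1:ℝ) ⊆ uIcc (0:ℝ) 1 := by
    rw [uIcc_of_le hs1, uIcc_of_le (by norm_num : (0:ℝ) ≤ 1)]
    exact Icc_subset_Icc (le_trans ht0 hts) le_rfl
  have hsplit : ∫ θ in (0:ℝ)..1, g θ =
      (∫ θ in (0:ℝ)..t, g θ) + (∫ θ in t..s, g θ) + ∫ θ in s..(1:ℝ), g θ := by
    rw [intervalIntegral.integral_add_adjacent_intervals (hgint.mono_set hsub1)
      (hgint.mono_set hsub2),
      intervalIntegral.integral_add_adjacent_intervals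
      ((hgint.mono_set hsub1).trans (hgint.mono_set hsub2)) (hgint.mono_set hsub3)]
  have e1 : ∫ θ in (0:ℝ)..t, g θ = ∫ θ in (0:ℝ)..t, Kd θ := by
    apply intervalIntegral.integral_congr_ae
    filter_upwards [hae] with θ hθ hmem
    rw [uIoc_of_le ht0] at hmem
    simp only [mem_insert_iff, mem_singleton_iff, not_or] at hθ
    have : θ ∈ Ioo (0:ℝ) t := ⟨hmem.1, lt_of_le_of_ne hmem.2 hθ.1⟩
    rw [hg, Set.indicator_of_mem (Set.mem_union_left _ this)]
  have e2 : ∫ θ in t..s, g θ = 0 := by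
    have : ∀ θ ∈ uIcc t s, g θ = 0 := by
      intro θ hθ
      rw [uIcc_of_le hts] at hθ
      rw [hg, Set.indicator_of_notMem]
      intro hc
      rcases (Set.mem_union _ _ _).mp hc with hc | hc
      · exact absurd hc.2 (not_lt.mpr hθ.1)
      · exact absurd hc.1 (not_lt.mpr hθ.2)
    rw [intervalIntegral.integral_congr this]
    simp
  have e3 : ∫ θ in s..(1:ℝ), g θ = ∫ θ in s..(1:ℝ), Kd θ := by
    apply intervalIntegral.integral_congr_ae
    filter_upwards [hae] with θ hθ hmem
    rw [uIoc_of_le hs1] at hmem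
    simp only [mem_insert_iff, mem_singleton_iff, not_or] at hθ
    rcases lt_trichotomy θ 1 with h | h | h
    · have hθI : θ ∈ Ioo s (1:ℝ) := mem_Ioo.mpr ⟨hmem.1, h⟩
      rw [hg, Set.indicator_of_mem (Set.mem_union_right _ hθI)]
    · subst h
      rw [hg, Kd_one, Set.indicator_of_notMem]
      intro hc
      rcases (Set.mem_union _ _ _).mp hc with hc | hc
      · have := hc.2; linarith
      · exact absurd hc.2 (lt_irrefl 1)
    · exact absurd hmem.2 (not_le.mpr h)
  rw [step1, hsplit, e1, e2, e3]
  ring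

lemma eqn : ∀ x ∈ Icc (0:ℝ) 2,
    ωd x = 1 - x^2 * ∫ θ in (0:ℝ)..1, Kd θ * (if 0 < ωd (x*θ) then (1:ℝ) else 0) := by
  intro x hx
  rcases le_or_gt x 1 with h | h
  · have hint : (∫ θ in (0:ℝ)..1, Kd θ * (if 0 < ωd (x*θ) then (1:ℝ) else 0))
        = (∫ θ in (0:ℝ)..1, Kd θ) + ∫ θ in (1:ℝ)..1, Kd θ := by
      apply integral_split (by norm_num) le_rfl le_rfl
      · intro θ hθ
        have h0 : 0 ≤ x*θ := mul_nonneg hx.1 hθ.1.le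
        have h1 : x*θ < 1 := by nlinarith [hθ.1, hθ.2, hx.1]
        rw [if_pos (ωd_pos h0 h1), mul_one]
      · intro θ hθ; exact absurd hθ.2 (not_lt.mpr hθ.1.le)
      · intro θ hθ; exact absurd hθ.2 (not_lt.mpr hθ.1.le)
    rw [hint, int_Kd_01, intervalIntegral.integral_same, ωd_le_one hx.1 h]
    ring
  · have hx0 : 0 < x := lt_trans one_pos h
    have ht1 : 1/x < 1 := by rw [div_lt_one hx0]; linarith
    have ht2 : 1/2 ≤ 1/x := by rw [div_le_div_iff₀ (by norm_num) hx0]; linarith [hx.2]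
    have hint : (∫ θ in (0:ℝ)..1, Kd θ * (if 0 < ωd (x*θ) then (1:ℝ) else 0))
        = (∫ θ in (0:ℝ)..(1/x), Kd θ) + ∫ θ in (1:ℝ)..1, Kd θ := by
      apply integral_split (by positivity) ht1.le le_rfl
      · intro θ hθ
        have h0 : 0 ≤ x*θ := mul_nonneg hx0.le hθ.1.le
        have h1 : x*θ < 1 := by
          calc x*θ < x*(1/x) := by apply mul_lt_mul_of_pos_left hθ.2 hx0
          _ = 1 := by field_simp
        rw [if_pos (ωd_pos h0 h1), mul_one]
      · intro θ hθ
        have h1 : 1 < x*θ := by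
          calc (1:ℝ) = x*(1/x) := by field_simp
          _ < x*θ := by apply mul_lt_mul_of_pos_left hθ.1 hx0
        have h2 : x*θ < 2 := by nlinarith [hθ.2, hx.2, hθ.1, hx0]
        rw [if_neg (not_lt.mpr (ωd_neg h1 h2).le), mul_zero]
      · intro θ hθ; exact absurd hθ.2 (not_lt.mpr hθ.1.le)
    rw [hint, intervalIntegral.integral_same, int_Kd_3 ht2 ht1.le,
      ωd_gt_one h.le hx.2]
    have harg : (x-1)/x = 1 - 1/x := by field_simp
    rw [harg]
    ring


/-- Existence of degenerate solutions: there are Γ > 0, a kernel K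
satisfying conditions (i) and (ii), points 0 < x₁ < x₂, and a solution ω of the
precipitation integral equation on [0,x₂] with a single ring [0,x₁) and gap
(x₁,x₂), which cannot be continued past x₂ as a sign-definite ring pattern. -/
theorem degenerate_solution_exists :
    ∃ (Γ k : ℝ) (K : ℝ → ℝ) (x₁ x₂ : ℝ) (ω : ℝ → ℝ),
      0 < Γ ∧ 0 < k ∧
      ContinuousOn K (Icc 0 1) ∧
      (∀ θ ∈ Icc (0:ℝ) 1, 0 ≤ K θ) ∧
      K 0 = 0 ∧
      HasDerivWithinAt K 0 (Icc 0 1) 0 ∧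
      Tendsto (fun θ => K θ / Real.sqrt (1 - θ)) (nhdsWithin 1 (Iio 1)) (nhds k) ∧
      0 < x₁ ∧ x₁ < x₂ ∧
      ContinuousOn ω (Icc 0 x₂) ∧
      (∀ x ∈ Ico (0:ℝ) x₁, 0 < ω x) ∧ ω x₁ = 0 ∧
      (∀ x ∈ Ioo x₁ x₂, ω x < 0) ∧ ω x₂ = 0 ∧
      (∀ x ∈ Icc (0:ℝ) x₂,
        ω x = Γ - x ^ 2 * ∫ θ in (0:ℝ)..1, K θ * (if 0 < ω (x * θ) then (1:ℝ) else 0)) ∧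
      (∀ ε > (0:ℝ), ¬ ∃ ω' : ℝ → ℝ,
        ContinuousOn ω' (Icc 0 (x₂ + ε)) ∧
        (∀ x ∈ Icc (0:ℝ) x₂, ω' x = ω x) ∧
        (∀ x ∈ Icc (0:ℝ) (x₂ + ε),
          ω' x = Γ - x ^ 2 * ∫ θ in (0:ℝ)..1, K θ * (if 0 < ω' (x * θ) then (1:ℝ) else 0)) ∧
        (∃ δ ∈ Ioc (0:ℝ) ε, ∀ x ∈ Ioo x₂ (x₂ + δ), ω' x ≠ 0)) := by
  refine ⟨1, 33*Real.sqrt 2/8, Kd, 1, 2, ωd, one_pos, by positivity, Kd_cont.continuousOn,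
    fun θ hθ => Kd_nonneg hθ.1 hθ.2, Kd_zero, Kd_deriv0, Kd_tendsto, one_pos, one_lt_two,
    ωd_contOn, fun x hx => ωd_pos hx.1 hx.2, ωd_one, fun x hx => ωd_neg hx.1 hx.2, ωd_two,
    fun x hx => eqn x hx, ?_⟩
  intro ε hε
  rintro ⟨ω', hcont, hext, heq, δ, hδ, hne⟩
  set δ' := min δ 1 with hδ'def
  have hδ'pos : 0 < δ' := lt_min hδ.1 one_pos
  have hδ'δ : δ' ≤ δ := min_le_left _ _
  have hδ'1 : δ' ≤ 1 := min_le_right _ _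
  have hδε : δ ≤ ε := hδ.2
  set x := 2 + δ'/2 with hxdef
  have hx1 : 2 < x := by simp only [hxdef]; linarith
  have hx2 : x < 2 + δ' := by simp only [hxdef]; linarith
  have hxhalf : x ≤ 5/2 := by simp only [hxdef]; linarith
  have hxmem : x ∈ Icc (0:ℝ) (2+ε) := ⟨by linarith, by linarith⟩
  have hxIoo : x ∈ Ioo (2:ℝ) (2+δ) := ⟨hx1, by linarith⟩
  have hx0 : (0:ℝ) < x := by linarith
  -- basic indicator facts
  have hind1 : ∀ θ ∈ Ioo (0:ℝ) (1/x),
      Kd θ * (if 0 < ω' (x*θ) then (1:ℝ) else 0) = Kd θ := by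
    intro θ hθ
    have h0 : 0 ≤ x*θ := mul_nonneg hx0.le hθ.1.le
    have h1 : x*θ < 1 := by
      calc x*θ < x*(1/x) := mul_lt_mul_of_pos_left hθ.2 hx0
      _ = 1 := by field_simp
    have := hext (x*θ) ⟨h0, by linarith⟩
    rw [this, if_pos (ωd_pos h0 h1), mul_one]
  have hind2 : ∀ θ ∈ Ioo (1/x) (2/x),
      Kd θ * (if 0 < ω' (x*θ) then (1:ℝ) else 0) = 0 := by
    intro θ hθ
    have h1 : 1 < x*θ := by
      calc (1:ℝ) = x*(1/x) := by field_simp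
      _ < x*θ := mul_lt_mul_of_pos_left hθ.1 hx0
    have h2 : x*θ < 2 := by
      calc x*θ < x*(2/x) := mul_lt_mul_of_pos_left hθ.2 hx0
      _ = 2 := by field_simp
    have := hext (x*θ) ⟨by linarith, by linarith⟩
    rw [this, if_neg (not_lt.mpr (ωd_neg h1 h2).le), mul_zero]
  -- sign dichotomy on (2, 2+δ')
  have hsign : (∀ y ∈ Ioo (2:ℝ) (2+δ'), 0 < ω' y) ∨ (∀ y ∈ Ioo (2:ℝ) (2+δ'), ω' y < 0) := by
    by_contra hcon
    push_neg at hcon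
    obtain ⟨⟨y₁, hy₁, hy₁'⟩, ⟨y₂, hy₂, hy₂'⟩⟩ := hcon
    have hsub : uIcc y₁ y₂ ⊆ Icc 0 (2+ε) := by
      apply uIcc_subset_Icc ⟨by linarith [hy₁.1], by linarith [hy₁.2]⟩
        ⟨by linarith [hy₂.1], by linarith [hy₂.2]⟩
    have h0mem : (0:ℝ) ∈ uIcc (ω' y₁) (ω' y₂) :=
      mem_uIcc.mpr (Or.inl ⟨hy₁', hy₂'⟩)
    obtain ⟨c, hc, hc0⟩ := intermediate_value_uIcc (hcont.mono hsub) h0mem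
    have hcmem : c ∈ Ioo (2:ℝ) (2+δ) := by
      rcases mem_uIcc.mp hc with h | h
      · exact ⟨by linarith [hy₁.1, h.1], by linarith [hy₂.2, h.2]⟩
      · exact ⟨by linarith [hy₂.1, h.1], by linarith [hy₁.2, h.2]⟩
    exact hne c hcmem hc0
  have hxint : 1/4 ≤ 1/x ∧ 1/x ≤ 1/2 := by
    constructor
    · rw [div_le_div_iff₀ (by norm_num) hx0]; linarith
    · rw [div_le_div_iff₀ hx0 (by norm_num)]; linarith
  have h2x : 1/2 ≤ 2/x ∧ 2/x ≤ 1 := by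
    constructor
    · rw [div_le_div_iff₀ (by norm_num) hx0]; linarith
    · rw [div_le_one hx0]; linarith
  have hts : 1/x ≤ 2/x := by
    rw [div_le_div_iff₀ hx0 hx0]; nlinarith
  rcases hsign with hpos | hneg
  · -- positive continuation: ω' x must be negative
    have hint : (∫ θ in (0:ℝ)..1, Kd θ * (if 0 < ω' (x*θ) then (1:ℝ) else 0))
        = (∫ θ in (0:ℝ)..(1/x), Kd θ) + ∫ θ in (2/x)..(1:ℝ), Kd θ := by
      apply integral_split (by positivity) hts h2x.2 hind1 hind2
      intro θ hθ
      have h1 : 2 < x*θ := by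
        calc (2:ℝ) = x*(2/x) := by field_simp
        _ < x*θ := mul_lt_mul_of_pos_left hθ.1 hx0
      have h2 : x*θ < 2+δ' := by
        calc x*θ < x*1 := mul_lt_mul_of_pos_left hθ.2 hx0
        _ = x := mul_one x
        _ < 2+δ' := hx2
      rw [if_pos (hpos (x*θ) ⟨h1, h2⟩), mul_one]
    have hωx := heq x hxmem
    rw [hint, int_Kd_2 hxint.1 hxint.2, int_Kd_tail h2x.1 h2x.2] at hωx
    have harg : 1 - 2/x = (x-2)/x := by field_simp
    have hGpos : 0 < Gd (1 - 2/x) := by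
      rw [harg]
      apply Gd_pos
      · apply div_pos (by linarith) hx0
      · rw [div_le_div_iff₀ hx0 (by norm_num)]; linarith
    have hval : ω' x < 0 := by
      rw [hωx]
      have hx2ne : x^2 ≠ 0 := by positivity
      have : x^2 * ((1/x)^2 + Gd (1-2/x)) = 1 + x^2 * Gd (1-2/x) := by
        field_simp
      rw [this]
      nlinarith [hGpos, sq_nonneg x]
    exact absurd (hpos x ⟨hx1, hx2⟩) (not_lt.mpr hval.le)
  · -- negative continuation: ω' x must be zero
    have hint : (∫ θ in (0:ℝ)..1, Kd θ * (if 0 < ω' (x*θ) then (1:ℝ) else 0))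
        = (∫ θ in (0:ℝ)..(1/x), Kd θ) + ∫ θ in (1:ℝ)..(1:ℝ), Kd θ := by
      apply integral_split (by positivity) (by linarith [hxint.2]) le_rfl hind1
      · intro θ hθ
        rcases lt_trichotomy (x*θ) 2 with h | h | h
        · have h' : θ < 2/x := by
            rw [lt_div_iff₀ hx0]; linarith [mul_comm x θ, h]
          exact hind2 θ ⟨hθ.1, h'⟩
        · have hxt : x*θ ∈ Icc (0:ℝ) 2 := ⟨by nlinarith [hθ.1.le], h.le⟩
          rw [hext (x*θ) hxt, h, ωd_two]
          norm_num
        · have h2 : x*θ < 2+δ' := by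
            calc x*θ < x*1 := mul_lt_mul_of_pos_left hθ.2 hx0
            _ = x := mul_one x
            _ < 2+δ' := hx2
          rw [if_neg (not_lt.mpr (hneg (x*θ) ⟨h, h2⟩).le), mul_zero]
      · intro θ hθ; exact absurd hθ.2 (not_lt.mpr hθ.1.le)
    have hωx := heq x hxmem
    rw [hint, int_Kd_2 hxint.1 hxint.2, intervalIntegral.integral_same] at hωx
    have hval : ω' x = 0 := by
      rw [hωx]
      field_simp
      ring
    exact hne x hxIoo hval
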